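/- Let (X,d) be a locally compact metric space. Suppose there exists a compact set K ⊆ X such that the orbit of K under the isometry group of (X,d) is all of X, i.e., X = Isom(X,d) · K. Then (X,d) is a complete metric space. -/

import Mathlib

open Metric Set

theorem stmt_0 {X : Type*} [MetricSpace X] [LocallyCompactSpace X]
    (K : Set X) (hK : IsCompact K)
    (horbit : ∀ x : X, ∃ (g : X ≃ᵢ X) (k : X), k ∈ K ∧ g k = x) :
    CompleteSpace X := by
  rcases isEmpty_or_nonempty X with hE | hNE
  · exact ⟨fun {f} hf => (hf.1.ne (Filter.filter_eq_bot_of_isEmpty f)).elim⟩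
  -- For each k ∈ K there is ε > 0 with closedBall k ε compact.
  have hloc : ∀ k : X, ∃ ε > 0, IsCompact (closedBall k ε) := by
    intro k
    obtain ⟨s, hscomp, hs⟩ := exists_compact_mem_nhds k
    obtain ⟨ε, hε, hball⟩ := Metric.nhds_basis_closedBall.mem_iff.mp hs
    exact ⟨ε, hε, hscomp.of_isClosed_subset isClosed_closedBall hball⟩
  choose ε hε hcomp using hloc
  -- Cover K by balls of radius ε k / 2, take finite subcover.
  obtain ⟨t, ht⟩ := hK.elim_finite_subcover (fun k : X => ball k (ε k / 2))
    (fun k => isOpen_ball) (fun k hk => mem_iUnion.2 ⟨k, mem_ball_self (by linarith [hε k])⟩)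
  -- uniform radius r
  have htne : t.Nonempty := by
    by_contra h
    rw [Finset.not_nonempty_iff_eq_empty] at h
    obtain ⟨x⟩ := hNE
    obtain ⟨g, k, hk, _⟩ := horbit x
    have := ht hk
    simp [h] at this
  obtain ⟨r, hrpos, hr⟩ : ∃ r > 0, ∀ k ∈ t, r ≤ ε k / 2 := by
    refine ⟨t.inf' htne (fun k => ε k / 2), ?_, fun k hk => Finset.inf'_le _ hk⟩
    obtain ⟨k₀, hk₀, hk₀e⟩ := Finset.exists_mem_eq_inf' htne (fun k => ε k / 2)
    rw [hk₀e]; linarith [hε k₀]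
  -- closed balls of radius r around points of K are compact
  have hKball : ∀ k ∈ K, IsCompact (closedBall k r) := by
    intro k hk
    obtain ⟨i, hi, hki⟩ := mem_iUnion₂.mp (ht hk)
    refine (hcomp i).of_isClosed_subset isClosed_closedBall fun y hy => ?_
    have h1 : dist y k ≤ r := mem_closedBall.mp hy
    have h2 : dist k i < ε i / 2 := mem_ball.mp hki
    have h3 : r ≤ ε i / 2 := hr i hi
    exact mem_closedBall.mpr (by calc dist y i ≤ dist y k + dist k i := dist_triangle _ _ _
      _ ≤ ε i := by linarith)
  -- closed balls of radius r everywhere are compact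
  have hball : ∀ x : X, IsCompact (closedBall x r) := by
    intro x
    obtain ⟨g, k, hk, hgk⟩ := horbit x
    have := (hKball k hk).image g.continuous
    rwa [g.image_closedBall, hgk] at this
  -- completeness
  refine Metric.complete_of_cauchySeq_tendsto fun u hu => ?_
  obtain ⟨N, hN⟩ := Metric.cauchySeq_iff.mp hu r hrpos
  have hmem : ∀ n, u (n + N) ∈ closedBall (u N) r :=
    fun n => mem_closedBall.2 (le_of_lt (by rw [dist_comm]; exact hN _ le_rfl _ (Nat.le_add_left _ _)))
  obtain ⟨x, -, hx⟩ := cauchySeq_tendsto_of_isComplete (hball (u N)).isComplete hmem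
    (hu.comp_tendsto (Filter.tendsto_add_atTop_nat N))
  exact ⟨x, tendsto_nhds_of_cauchySeq_of_subseq hu (Filter.tendsto_add_atTop_nat N) hx⟩
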